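/- Let A and B be real numbers with A > B > −1, let ρ > 0 and let 0 < η < ρ². Then the function t ↦ (ρ² − t²)^{A−B−1} t^{2B+1} (1 − η/t²)^{B} is (Lebesgue) integrable on the interval (√η, ρ), and one has the identity (1 − η/ρ²)^{A} = [2 Γ(A+1) / (Γ(B+1) Γ(A−B))] · ρ^{−2A} ∫_{√η}^{ρ} (ρ² − t²)^{A−B−1} t^{2B+1} (1 − η/t²)^{B} dt, where Γ denotes the real Gamma function. -/

import Mathlib

open MeasureTheory

lemma realBeta (u v : ℝ) (hu : 0 < u) (hv : 0 < v) :
    IntegrableOn (fun x : ℝ => x ^ (u - 1) * (1 - x) ^ (v - 1)) (Set.Ioo 0 1) volume ∧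
    ∫ x in Set.Ioo (0:ℝ) 1, x ^ (u - 1) * (1 - x) ^ (v - 1) =
      Real.Gamma u * Real.Gamma v / Real.Gamma (u + v) := by
  have hu' : 0 < (u : ℂ).re := by simpa using hu
  have hv' : 0 < (v : ℂ).re := by simpa using hv
  have heqOn : ∀ x : ℝ, 0 ≤ x → x ≤ 1 →
      (x : ℂ) ^ ((u:ℂ) - 1) * (1 - (x:ℂ)) ^ ((v:ℂ) - 1)
        = ((x ^ (u - 1) * (1 - x) ^ (v - 1) : ℝ) : ℂ) := by
    intro x hx0 hx1
    rw [show ((u:ℂ) - 1) = ((u - 1 : ℝ) : ℂ) by push_cast; ring,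
      show ((v:ℂ) - 1) = ((v - 1 : ℝ) : ℂ) by push_cast; ring,
      show (1 - (x:ℂ)) = ((1 - x : ℝ) : ℂ) by push_cast; ring,
      ← Complex.ofReal_cpow hx0, ← Complex.ofReal_cpow (by linarith), ← Complex.ofReal_mul]
  have hconv := Complex.betaIntegral_convergent hu' hv'
  have hIoo : IntegrableOn (fun x : ℝ => (x:ℂ) ^ ((u:ℂ) - 1) * (1 - (x:ℂ)) ^ ((v:ℂ) - 1))
      (Set.Ioo 0 1) volume :=
    ((intervalIntegrable_iff_integrableOn_Ioc_of_le zero_le_one).mp hconv).mono_set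
      Set.Ioo_subset_Ioc_self
  have hint : IntegrableOn (fun x : ℝ => x ^ (u - 1) * (1 - x) ^ (v - 1)) (Set.Ioo 0 1) volume := by
    refine IntegrableOn.congr_fun hIoo.re (fun x hx => ?_) measurableSet_Ioo
    simp [heqOn x hx.1.le hx.2.le]
  refine ⟨hint, ?_⟩
  have hbeta : Complex.betaIntegral u v
      = ((∫ x in (0:ℝ)..1, x ^ (u - 1) * (1 - x) ^ (v - 1) : ℝ) : ℂ) := by
    rw [Complex.betaIntegral, ← intervalIntegral.integral_ofReal]
    refine intervalIntegral.integral_congr fun x hx => ?_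
    rw [Set.uIcc_of_le zero_le_one] at hx
    exact heqOn x hx.1 hx.2
  have hG := Complex.Gamma_mul_Gamma_eq_betaIntegral hu' hv'
  rw [hbeta, show ((u:ℂ) + v) = ((u + v : ℝ) : ℂ) by push_cast; ring,
    Complex.Gamma_ofReal, Complex.Gamma_ofReal, Complex.Gamma_ofReal,
    ← Complex.ofReal_mul, ← Complex.ofReal_mul] at hG
  have hGR : Real.Gamma u * Real.Gamma v
      = Real.Gamma (u + v) * ∫ x in (0:ℝ)..1, x ^ (u - 1) * (1 - x) ^ (v - 1) := by
    exact_mod_cast hG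
  have hΓ : Real.Gamma (u + v) ≠ 0 := (Real.Gamma_pos_of_pos (by linarith)).ne'
  rw [intervalIntegral.integral_of_le zero_le_one, integral_Ioc_eq_integral_Ioo] at hGR
  field_simp
  linarith [hGR]

/-- Stein–Weiss subordination formula: for `A > B > -1`, `ρ > 0`, `0 < η < ρ²`,
the function `t ↦ (ρ² − t²)^{A−B−1} t^{2B+1} (1 − η/t²)^B` is integrable on
`(√η, ρ)` and
`(1 − η/ρ²)^A = (2Γ(A+1)/(Γ(B+1)Γ(A−B))) · ρ^{−2A} ∫_{√η}^{ρ} (ρ²−t²)^{A−B−1} t^{2B+1} (1−η/t²)^B dt`. -/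
theorem stmt5 (A B ρ η : ℝ) (hAB : B < A) (hB : -1 < B) (hρ : 0 < ρ)
    (hη₀ : 0 < η) (hη : η < ρ ^ 2) :
    IntegrableOn
        (fun t : ℝ => (ρ ^ 2 - t ^ 2) ^ (A - B - 1) * t ^ (2 * B + 1) * (1 - η / t ^ 2) ^ B)
        (Set.Ioo (Real.sqrt η) ρ) volume ∧
      (1 - η / ρ ^ 2) ^ A =
        (2 * Real.Gamma (A + 1) / (Real.Gamma (B + 1) * Real.Gamma (A - B))) *
          ρ ^ (-(2 * A)) *
          ∫ t in Set.Ioo (Real.sqrt η) ρ,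
            (ρ ^ 2 - t ^ 2) ^ (A - B - 1) * t ^ (2 * B + 1) * (1 - η / t ^ 2) ^ B := by
  obtain ⟨hbi, hbv⟩ := realBeta (B + 1) (A - B) (by linarith) (by linarith)
  rw [show B + 1 - 1 = B by ring] at hbi hbv
  rw [show B + 1 + (A - B) = A + 1 by ring] at hbv
  set f : ℝ → ℝ :=
    fun t => (ρ ^ 2 - t ^ 2) ^ (A - B - 1) * t ^ (2 * B + 1) * (1 - η / t ^ 2) ^ B with hf
  set g : ℝ → ℝ := fun u => (ρ ^ 2 - u) ^ (A - B - 1) * (u - η) ^ B with hg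
  set c : ℝ := ρ ^ 2 - η with hc
  have hc0 : 0 < c := by simp [hc]; linarith
  have hsρ : Real.sqrt η < ρ := (Real.sqrt_lt' hρ).mpr hη
  set s1 : Set ℝ := Set.Ioo (Real.sqrt η) ρ with hs1
  -- substitution 2 : affine map ψ x = η + c * x
  set ψ : ℝ → ℝ := fun x => η + c * x with hψ
  have hderiv2 : ∀ x ∈ Set.Ioo (0:ℝ) 1, HasDerivWithinAt ψ c (Set.Ioo 0 1) x := by
    intro x _
    have := (((hasDerivAt_id x).const_mul c).const_add η).hasDerivWithinAt (s := Set.Ioo 0 1)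
    simp only [id_eq, mul_one] at this
    exact this
  have hinj2 : Set.InjOn ψ (Set.Ioo 0 1) := by
    intro a _ b _ h
    have : c * a = c * b := by simpa [hψ] using h
    exact mul_left_cancel₀ hc0.ne' this
  have himg2 : ψ '' Set.Ioo 0 1 = Set.Ioo η (ρ ^ 2) := by
    ext u
    constructor
    · rintro ⟨x, hx, rfl⟩
      constructor
      · simp only [hψ]; nlinarith [hx.1]
      · simp only [hψ]; nlinarith [hx.2]
    · intro hu
      refine ⟨(u - η) / c, ⟨div_pos (by linarith [hu.1]) hc0, ?_⟩, ?_⟩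
      · rw [div_lt_one hc0]; simp [hc]; linarith [hu.2]
      · simp [hψ]; field_simp; ring
  have heq2 : ∀ x ∈ Set.Ioo (0:ℝ) 1,
      |c| • g (ψ x) = c ^ A * (x ^ B * (1 - x) ^ (A - B - 1)) := by
    intro x hx
    have hx0 : 0 < x := hx.1
    have hx1 : 0 < 1 - x := by linarith [hx.2]
    have h1 : ρ ^ 2 - ψ x = c * (1 - x) := by simp [hψ, hc]; ring
    have h2 : ψ x - η = c * x := by simp [hψ]
    rw [smul_eq_mul, abs_of_pos hc0, hg]
    simp only [h1, h2]
    rw [Real.mul_rpow hc0.le hx1.le, Real.mul_rpow hc0.le hx0.le,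
      show c ^ A = c ^ (A - B - 1) * c ^ B * c by
        rw [← Real.rpow_add hc0, ← Real.rpow_add_one hc0.ne']; ring_nf]
    ring
  have hgi : IntegrableOn g (Set.Ioo η (ρ ^ 2)) volume := by
    rw [← himg2,
      integrableOn_image_iff_integrableOn_abs_deriv_smul measurableSet_Ioo hderiv2 hinj2]
    exact IntegrableOn.congr_fun (hbi.const_mul (c ^ A))
      (fun x hx => (heq2 x hx).symm) measurableSet_Ioo
  have hgv : ∫ u in Set.Ioo η (ρ ^ 2), g u
      = c ^ A * (Real.Gamma (B + 1) * Real.Gamma (A - B) / Real.Gamma (A + 1)) := by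
    rw [← himg2,
      integral_image_eq_integral_abs_deriv_smul measurableSet_Ioo hderiv2 hinj2,
      setIntegral_congr_fun measurableSet_Ioo heq2, integral_const_mul, hbv]
  -- substitution 1 : φ t = t ^ 2
  have hderiv1 : ∀ t ∈ s1, HasDerivWithinAt (fun t : ℝ => t ^ 2) (2 * t) s1 t := by
    intro t _
    simpa using (hasDerivAt_pow 2 t).hasDerivWithinAt
  have hpos : ∀ t ∈ s1, 0 < t := fun t ht => lt_of_le_of_lt (Real.sqrt_nonneg η) ht.1
  have hinj1 : Set.InjOn (fun t : ℝ => t ^ 2) s1 := by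
    intro a ha b hb h
    have := Real.sqrt_sq (hpos a ha).le
    rw [← Real.sqrt_sq (hpos a ha).le, ← Real.sqrt_sq (hpos b hb).le]
    simp only at h
    rw [h]
  have himg1 : (fun t : ℝ => t ^ 2) '' s1 = Set.Ioo η (ρ ^ 2) := by
    ext u
    constructor
    · rintro ⟨t, ht, rfl⟩
      have ht0 := hpos t ht
      have hsq := Real.sq_sqrt hη₀.le
      constructor
      · show η < t ^ 2
        nlinarith [ht.1, Real.sqrt_nonneg η]
      · show t ^ 2 < ρ ^ 2
        nlinarith [ht.2]
    · intro hu
      have hu0 : 0 < u := hη₀.trans hu.1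
      exact ⟨Real.sqrt u, ⟨Real.sqrt_lt_sqrt hη₀.le hu.1, (Real.sqrt_lt' hρ).mpr hu.2⟩,
        Real.sq_sqrt hu0.le⟩
  have heq1 : ∀ t ∈ s1, |2 * t| • g (t ^ 2) = 2 * f t := by
    intro t ht
    have ht0 : 0 < t := hpos t ht
    have htη : η < t ^ 2 := by
      have := Real.sq_sqrt hη₀.le
      nlinarith [ht.1, Real.sqrt_nonneg η]
    have ht2 : (0:ℝ) < t ^ 2 := by positivity
    have hrp : (0:ℝ) < t ^ (2 * B) := Real.rpow_pos_of_pos ht0 _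
    have hA : t ^ (2 * B + 1) = t ^ (2 * B) * t := by
      rw [Real.rpow_add ht0, Real.rpow_one]
    have hB2 : ((t : ℝ) ^ 2) ^ B = t ^ (2 * B) := by
      rw [← Real.rpow_natCast t 2, ← Real.rpow_mul ht0.le]
      norm_num
    have h3 : (1 - η / t ^ 2) = (t ^ 2 - η) / t ^ 2 := by field_simp
    rw [smul_eq_mul, abs_of_pos (by linarith), hf, hg]
    simp only [h3]
    rw [Real.div_rpow (by linarith) ht2.le, hB2, hA]
    field_simp
  have hfi2 : IntegrableOn (fun t => |2 * t| • g (t ^ 2)) s1 volume := by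
    rw [← integrableOn_image_iff_integrableOn_abs_deriv_smul measurableSet_Ioo hderiv1 hinj1]
    rw [himg1]; exact hgi
  have hfi : IntegrableOn f s1 volume := by
    refine IntegrableOn.congr_fun (hfi2.const_mul 2⁻¹) (fun t ht => ?_) measurableSet_Ioo
    rw [heq1 t ht]; ring
  refine ⟨hfi, ?_⟩
  have hIval : ∫ t in s1, f t
      = 2⁻¹ * (c ^ A * (Real.Gamma (B + 1) * Real.Gamma (A - B) / Real.Gamma (A + 1))) := by
    rw [← hgv, ← himg1,
      integral_image_eq_integral_abs_deriv_smul measurableSet_Ioo hderiv1 hinj1,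
      setIntegral_congr_fun measurableSet_Ioo heq1, integral_const_mul]
    ring
  have hΓ1 : 0 < Real.Gamma (B + 1) := Real.Gamma_pos_of_pos (by linarith)
  have hΓ2 : 0 < Real.Gamma (A - B) := Real.Gamma_pos_of_pos (by linarith)
  have hΓ3 : 0 < Real.Gamma (A + 1) := Real.Gamma_pos_of_pos (by linarith)
  have hρ2 : (0:ℝ) < ρ ^ 2 := by positivity
  have hLHS : (1 - η / ρ ^ 2) ^ A = c ^ A * ρ ^ (-(2 * A)) := by
    have h4 : ((ρ:ℝ) ^ 2) ^ A = ρ ^ (2 * A) := by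
      rw [← Real.rpow_natCast ρ 2, ← Real.rpow_mul hρ.le]
      norm_num
    rw [show (1 - η / ρ ^ 2) = c / ρ ^ 2 by rw [hc]; field_simp,
      Real.div_rpow hc0.le hρ2.le, h4, Real.rpow_neg hρ.le, div_eq_mul_inv]
  rw [hIval, hLHS]
  field_simp
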